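/- Let ℒ be a class of scattered linear orders downward closed under embeddability. Then for all linear orders L and L', L·ℚ ⊴^ℒ L' if and only if L·ℚ convexly embeds into L'. -/

import Mathlib

universe u v w x

/-- A `K`-convex partition of `L`: a partition of `L` into nonempty pieces indexed by `K`
such that `k < k'` iff every element of `P k` is below every element of `P k'`. -/
def IsConvexPartition {K : Type u} {L : Type v} [LinearOrder K] [LinearOrder L]
    (P : K → Set L) : Prop :=
  (∀ k, (P k).Nonempty) ∧ (∀ y : L, ∃! k, y ∈ P k) ∧
    ∀ k k' : K, k < k' ↔ ∀ a ∈ P k, ∀ b ∈ P k', a < b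

/-- `ℒ`-convex embeddability: `L ⊴^ℒ L'` iff there are `K ∈ ℒ`, a `K`-convex partition of `L`,
and an order embedding of `L` into `L'` mapping each piece onto a convex set. -/
def LCE (ℒ : Set LinOrd.{u}) (L : Type v) (L' : Type w)
    [LinearOrder L] [LinearOrder L'] : Prop :=
  ∃ K ∈ ℒ, ∃ P : ↥K → Set L, IsConvexPartition P ∧
    ∃ f : L ↪o L', ∀ k : ↥K, (⇑f '' P k).OrdConnected

/-- For a class `ℒ` of scattered linear orders downward closed under embeddability:
`L·ℚ ⊴^ℒ L'` iff `L·ℚ` convexly embeds into `L'`. -/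
theorem stmt_9 (ℒ : Set LinOrd.{u}) (hne : ℒ.Nonempty)
    (hmem : ∀ A ∈ ℒ, Nonempty ↥A ∧ ¬ Nonempty (ℚ ↪o ↥A))
    (hdc : ∀ A ∈ ℒ, ∀ B : LinOrd.{u}, Nonempty ↥B → Nonempty (↥B ↪o ↥A) → B ∈ ℒ)
    {L : Type v} {L' : Type w} [LinearOrder L] [LinearOrder L'] [Nonempty L] :
    LCE ℒ (ℚ ×ₗ L) L' ↔ ∃ f : (ℚ ×ₗ L) ↪o L', (Set.range ⇑f).OrdConnected := by
  classical
  obtain ⟨l₀⟩ := ‹Nonempty L›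
  constructor
  · rintro ⟨K, hK, P, ⟨hPne, hPmem, hPlt⟩, f, hconv⟩
    have hsc := (hmem K hK).2
    let ι : (ℚ ×ₗ L) → ↥K := fun y => (hPmem y).exists.choose
    have hι : ∀ y, y ∈ P (ι y) := fun y => (hPmem y).exists.choose_spec
    have hιuniq : ∀ y k, y ∈ P k → k = ι y := fun y k hk => (hPmem y).unique hk (hι y)
    have hmono : Monotone ι := by
      intro y y' h
      by_contra hlt
      push_neg at hlt
      exact absurd ((hPlt _ _).1 hlt _ (hι y') _ (hι y)) (not_lt.2 h)
    have hmono2 : Monotone (fun q : ℚ => ι (toLex (q, l₀))) := by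
      intro q q' h
      exact hmono (Prod.Lex.toLex_mono ⟨h, le_rfl⟩)
    have hninj : ¬ Function.Injective (fun q : ℚ => ι (toLex (q, l₀))) := by
      intro hinj
      exact hsc ⟨OrderEmbedding.ofStrictMono _ (hmono2.strictMono_of_injective hinj)⟩
    obtain ⟨a, b, hab, heq⟩ : ∃ a b : ℚ, a < b ∧ ι (toLex (a, l₀)) = ι (toLex (b, l₀)) := by
      simp only [Function.Injective, not_forall] at hninj
      obtain ⟨x, y, hxy, hne'⟩ := hninj
      rcases lt_or_gt_of_ne hne' with h | h
      · exact ⟨x, y, h, hxy⟩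
      · exact ⟨y, x, h, hxy.symm⟩
    set k₀ := ι (toLex (a, l₀)) with hk₀
    -- each piece is convex
    have hPconv : ∀ k (x y z : ℚ ×ₗ L), x ∈ P k → z ∈ P k → x ≤ y → y ≤ z → y ∈ P k := by
      intro k x y z hx hz hxy hyz
      rcases lt_trichotomy (ι y) k with h | h | h
      · exact absurd ((hPlt _ _).1 h _ (hι y) _ hx) (not_lt.2 hxy)
      · exact h ▸ hι y
      · exact absurd ((hPlt _ _).1 h _ hz _ (hι y)) (not_lt.2 hyz)
    set S : Set (ℚ ×ₗ L) := {x | a < (ofLex x).1 ∧ (ofLex x).1 < b} with hS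
    have hSP : S ⊆ P k₀ := by
      intro x hx
      refine hPconv k₀ (toLex (a, l₀)) x (toLex (b, l₀)) (hι _) (heq ▸ hι _) ?_ ?_
      · exact le_of_lt (Prod.Lex.lt_iff.2 (Or.inl hx.1))
      · exact le_of_lt (Prod.Lex.lt_iff.2 (Or.inl hx.2))
    -- S is convex
    have hSconv : ∀ x y z : ℚ ×ₗ L, x ∈ S → z ∈ S → x ≤ y → y ≤ z → y ∈ S := by
      intro x y z hx hz hxy hyz
      have h1 : (ofLex x).1 ≤ (ofLex y).1 := by
        rcases Prod.Lex.le_iff.1 hxy with h | h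
        · exact h.le
        · exact h.1.le
      have h2 : (ofLex y).1 ≤ (ofLex z).1 := by
        rcases Prod.Lex.le_iff.1 hyz with h | h
        · exact h.le
        · exact h.1.le
      exact ⟨lt_of_lt_of_le hx.1 h1, lt_of_le_of_lt h2 hz.2⟩
    have hIoo : Nonempty (Set.Ioo a b) := Set.nonempty_Ioo_subtype hab
    obtain ⟨e⟩ := Order.iso_of_countable_dense ℚ (Set.Ioo a b)
    let gfun : (ℚ ×ₗ L) → (ℚ ×ₗ L) := fun x => toLex ((e (ofLex x).1 : ℚ), (ofLex x).2)
    have hgsm : StrictMono gfun := by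
      intro x y hxy
      rcases Prod.Lex.lt_iff.1 hxy with h | ⟨h1, h2⟩
      · exact Prod.Lex.lt_iff.2 (Or.inl (by exact_mod_cast e.strictMono h))
      · exact Prod.Lex.lt_iff.2 (Or.inr ⟨congrArg (fun q => (e q : ℚ)) h1, h2⟩)
    let g : (ℚ ×ₗ L) ↪o (ℚ ×ₗ L) := OrderEmbedding.ofStrictMono gfun hgsm
    have hrg : Set.range gfun = S := by
      ext x
      constructor
      · rintro ⟨y, rfl⟩
        exact ⟨(e (ofLex y).1).2.1, (e (ofLex y).1).2.2⟩
      · rintro ⟨h1, h2⟩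
        refine ⟨toLex (e.symm ⟨(ofLex x).1, h1, h2⟩, (ofLex x).2), ?_⟩
        simp [gfun]
    refine ⟨g.trans f, ?_⟩
    have hrange : Set.range ⇑(g.trans f) = ⇑f '' S := by
      rw [← hrg]
      ext z
      simp [g, Set.range_comp]
    rw [hrange]
    constructor
    intro x hx y hy z hz
    obtain ⟨u, hu, rfl⟩ := hx
    obtain ⟨v, hv, rfl⟩ := hy
    have hz' : z ∈ ⇑f '' P k₀ :=
      (hconv k₀).out ⟨u, hSP hu, rfl⟩ ⟨v, hSP hv, rfl⟩ hz
    obtain ⟨w, hw, rfl⟩ := hz'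
    have h1 : u ≤ w := f.le_iff_le.1 hz.1
    have h2 : w ≤ v := f.le_iff_le.1 hz.2
    exact ⟨w, hSconv u w v hu hv h1 h2, rfl⟩
  · rintro ⟨f, hf⟩
    obtain ⟨A, hA⟩ := hne
    obtain ⟨a⟩ := (hmem A hA).1
    haveI : Subsingleton ↥(LinOrd.of PUnit.{u+1}) := ⟨fun x y => by cases x; cases y; rfl⟩
    have hPU : (LinOrd.of PUnit.{u+1}) ∈ ℒ := by
      refine hdc A hA _ ⟨PUnit.unit⟩ ⟨OrderEmbedding.ofStrictMono (fun _ => a) ?_⟩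
      intro x y h
      cases x; cases y; exact absurd h (lt_irrefl _)
    refine ⟨LinOrd.of PUnit.{u+1}, hPU, fun _ => Set.univ, ⟨?_, ?_, ?_⟩, f, ?_⟩
    · intro k
      exact ⟨toLex (0, l₀), trivial⟩
    · intro y
      exact ⟨PUnit.unit, trivial, fun k _ => Subsingleton.elim _ _⟩
    · intro k k'
      constructor
      · intro h
        exact absurd (Subsingleton.elim k k') (ne_of_lt h)
      · intro h
        exact absurd (h (toLex (0, l₀)) trivial (toLex (0, l₀)) trivial) (lt_irrefl _)
    · intro k
      rw [Set.image_univ]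
      exact hf
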